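/- (Explicit value of the Beesack–Das constant for equal power weights) Let 1 < p < ∞, 0 < l < p, α < p, C > 0, C' > 0, and set q(t) := C t^{α−1} and v(t) := C' t^{α−1} for t > 0. Then K(0,1,q,v) = ((p−l)/p)^{(p−l)/p} · (C/C') · ((p−1)/(p−α))^{(p−1)l/p} · p^{−l/p}. In particular K(0,1,q,v) ≤ 1 if and only if C ≤ C' · p^{1+(l−1)/p} (p−α)^{(p−1)l/p} / ( ((p−l)/p)^{(p−l)/p} p^{1+(l−1)/p−l/p} (p−1)^{(p−1)l/p} ) — i.e., if and only if C ((p−l)/p)^{(p−l)/p} ((p−1)/(p−α))^{(p−1)l/p} p^{−l/p} ≤ C'. -/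

import Mathlib

open MeasureTheory Set Filter
open scoped ENNReal

/-- The Beesack–Das constant
`K(s,·,q,v) = ((p-l)/p)^{(p-l)/p} [∫_S q(t)^{p/l} v(t)^{-(p-l)/l}
  (∫_s^t v(σ)^{-1/(p-1)} dσ)^{p-1} dt]^{l/p}`, over a set `S`. -/
noncomputable def BDK (p l : ℝ) (q v : ℝ → ℝ) (s : ℝ) (S : Set ℝ) : ℝ≥0∞ :=
  ENNReal.ofReal (((p - l) / p) ^ ((p - l) / p)) *
    (∫⁻ t in S,
      ENNReal.ofReal (q t) ^ (p / l) * ENNReal.ofReal (v t) ^ (-((p - l) / l)) *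
        (∫⁻ σ in Set.Ioc s t, ENNReal.ofReal (v σ) ^ (-(1 / (p - 1)))) ^ (p - 1)) ^ (l / p)

/-- Lebesgue integral of a power function on `(0, t]`. -/
lemma lint_cpow (c b t : ℝ) (hc : 0 < c) (hb : -1 < b) (ht : 0 < t) :
    ∫⁻ σ in Set.Ioc (0:ℝ) t, ENNReal.ofReal (c * σ ^ b) =
      ENNReal.ofReal (c / (b + 1) * t ^ (b + 1)) := by
  have hb1 : 0 < b + 1 := by linarith
  rw [← ofReal_integral_eq_lintegral_ofReal]
  · congr 1
    rw [← intervalIntegral.integral_of_le ht.le, intervalIntegral.integral_const_mul,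
      integral_rpow (Or.inl hb), Real.zero_rpow hb1.ne']
    ring
  · exact ((intervalIntegral.intervalIntegrable_rpow' hb).const_mul c).1
  · refine (ae_restrict_iff' measurableSet_Ioc).2 (ae_of_all _ fun σ hσ => ?_)
    exact mul_nonneg hc.le (Real.rpow_nonneg hσ.1.le _)

/-- **Explicit value of the Beesack–Das constant for equal power weights**:
for `q(t) = C t^{α-1}` and `v(t) = C' t^{α-1}`,
`K(0,1,q,v) = ((p-l)/p)^{(p-l)/p} (C/C') ((p-1)/(p-α))^{(p-1)l/p} p^{-l/p}`,
and `K(0,1,q,v) ≤ 1` iff `C ((p-l)/p)^{(p-l)/p} ((p-1)/(p-α))^{(p-1)l/p} p^{-l/p} ≤ C'`. -/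
theorem BDK_equal_power_weights_value
    (p l α C C' : ℝ)
    (hp : 1 < p) (hl0 : 0 < l) (hlp : l < p) (hαp : α < p)
    (hC : 0 < C) (hC' : 0 < C') :
    BDK p l (fun t => C * t ^ (α - 1)) (fun t => C' * t ^ (α - 1)) 0 (Set.Ioc (0:ℝ) 1) =
        ENNReal.ofReal (((p - l) / p) ^ ((p - l) / p) * (C / C') *
          ((p - 1) / (p - α)) ^ ((p - 1) * l / p) * p ^ (-(l / p))) ∧
      (BDK p l (fun t => C * t ^ (α - 1)) (fun t => C' * t ^ (α - 1)) 0 (Set.Ioc (0:ℝ) 1) ≤ 1 ↔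
        C * ((p - l) / p) ^ ((p - l) / p) *
          ((p - 1) / (p - α)) ^ ((p - 1) * l / p) * p ^ (-(l / p)) ≤ C') := by
  have hp0 : 0 < p := by linarith
  have hp1 : 0 < p - 1 := by linarith
  have hpα : 0 < p - α := by linarith
  have hpl : 0 < p - l := by linarith
  have hm0 : 0 < (p - α) / (p - 1) := div_pos hpα hp1
  set e : ℝ := -(1 / (p - 1)) with he
  set m : ℝ := (p - α) / (p - 1) with hm
  set cin : ℝ := C' ^ e / m with hcin
  have hcin0 : 0 < cin := div_pos (Real.rpow_pos_of_pos hC' _) hm0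
  set D : ℝ := C ^ (p / l) * C' ^ (-(p / l)) * ((p - 1) / (p - α)) ^ (p - 1) with hD
  have hD0 : 0 < D := by positivity
  -- the inner integral
  have hbm : (α - 1) * e + 1 = m := by rw [he, hm]; field_simp; ring
  have hinner : ∀ t : ℝ, 0 < t →
      (∫⁻ σ in Set.Ioc (0:ℝ) t, ENNReal.ofReal (C' * σ ^ (α - 1)) ^ e) =
        ENNReal.ofReal (cin * t ^ m) := by
    intro t ht
    have hcongr : ∀ᵐ σ ∂(volume : Measure ℝ), σ ∈ Set.Ioc (0:ℝ) t →
        ENNReal.ofReal (C' * σ ^ (α - 1)) ^ e =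
          ENNReal.ofReal (C' ^ e * σ ^ ((α - 1) * e)) := by
      refine ae_of_all _ fun σ hσ => ?_
      have hσ0 : 0 < σ := hσ.1
      rw [ENNReal.ofReal_rpow_of_pos (by positivity),
        Real.mul_rpow hC'.le (Real.rpow_nonneg hσ0.le _), ← Real.rpow_mul hσ0.le]
    rw [setLIntegral_congr_fun_ae measurableSet_Ioc hcongr,
      lint_cpow _ _ _ (Real.rpow_pos_of_pos hC' _) (by linarith [hbm, hm0]) ht, hbm]
  -- constant identity
  have hconst : C ^ (p / l) * C' ^ (-((p - l) / l)) * cin ^ (p - 1) = D := by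
    have h1 : cin ^ (p - 1) = C' ^ (-1 : ℝ) * ((p - 1) / (p - α)) ^ (p - 1) := by
      rw [hcin, div_eq_mul_inv, Real.mul_rpow (Real.rpow_nonneg hC'.le _) (by positivity),
        ← Real.rpow_mul hC'.le, show m⁻¹ = (p - 1) / (p - α) by rw [hm, inv_div],
        show e * (p - 1) = -1 by rw [he]; field_simp]
    have h2 : C' ^ (-((p - l) / l)) * C' ^ (-1 : ℝ) = C' ^ (-(p / l)) := by
      rw [← Real.rpow_add hC']; congr 1; field_simp; ring
    rw [h1, hD]
    linear_combination (C ^ (p / l) * ((p - 1) / (p - α)) ^ (p - 1)) * h2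
  -- pointwise real identity for t > 0
  have hpt : ∀ t : ℝ, 0 < t →
      (C * t ^ (α - 1)) ^ (p / l) * (C' * t ^ (α - 1)) ^ (-((p - l) / l)) *
        (cin * t ^ m) ^ (p - 1) = D * t ^ (p - 1) := by
    intro t ht
    rw [Real.mul_rpow hC.le (Real.rpow_nonneg ht.le _),
      Real.mul_rpow hC'.le (Real.rpow_nonneg ht.le _),
      Real.mul_rpow hcin0.le (Real.rpow_nonneg ht.le _),
      ← Real.rpow_mul ht.le, ← Real.rpow_mul ht.le, ← Real.rpow_mul ht.le]
    have hts : t ^ ((α - 1) * (p / l)) * t ^ ((α - 1) * (-((p - l) / l))) * t ^ (m * (p - 1)) =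
        t ^ (p - 1) := by
      rw [← Real.rpow_add ht, ← Real.rpow_add ht]
      congr 1
      rw [hm]; field_simp; ring
    calc C ^ (p / l) * t ^ ((α - 1) * (p / l)) * (C' ^ (-((p - l) / l)) *
          t ^ ((α - 1) * (-((p - l) / l)))) * (cin ^ (p - 1) * t ^ (m * (p - 1)))
        = (C ^ (p / l) * C' ^ (-((p - l) / l)) * cin ^ (p - 1)) *
          (t ^ ((α - 1) * (p / l)) * t ^ ((α - 1) * (-((p - l) / l))) * t ^ (m * (p - 1))) := by
          ring
      _ = D * t ^ (p - 1) := by rw [hconst, hts]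
  -- the outer integral
  have houter : (∫⁻ t in Set.Ioc (0:ℝ) 1,
      ENNReal.ofReal (C * t ^ (α - 1)) ^ (p / l) *
        ENNReal.ofReal (C' * t ^ (α - 1)) ^ (-((p - l) / l)) *
        (∫⁻ σ in Set.Ioc (0:ℝ) t, ENNReal.ofReal (C' * σ ^ (α - 1)) ^ e) ^ (p - 1)) =
      ENNReal.ofReal (D / p) := by
    have hcongr : ∀ᵐ t ∂(volume : Measure ℝ), t ∈ Set.Ioc (0:ℝ) 1 →
        ENNReal.ofReal (C * t ^ (α - 1)) ^ (p / l) *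
          ENNReal.ofReal (C' * t ^ (α - 1)) ^ (-((p - l) / l)) *
          (∫⁻ σ in Set.Ioc (0:ℝ) t, ENNReal.ofReal (C' * σ ^ (α - 1)) ^ e) ^ (p - 1) =
          ENNReal.ofReal (D * t ^ (p - 1)) := by
      refine ae_of_all _ fun t ht => ?_
      have ht0 : 0 < t := ht.1
      rw [hinner t ht0, ENNReal.ofReal_rpow_of_pos (by positivity),
        ENNReal.ofReal_rpow_of_pos (by positivity), ENNReal.ofReal_rpow_of_pos (by positivity),
        ← ENNReal.ofReal_mul (by positivity), ← ENNReal.ofReal_mul (by positivity), hpt t ht0]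
    rw [setLIntegral_congr_fun_ae measurableSet_Ioc hcongr,
      lint_cpow D (p - 1) 1 hD0 (by linarith) one_pos,
      show p - 1 + 1 = p by ring, Real.one_rpow, mul_one]
  -- the final real identity
  have hfin : (D / p) ^ (l / p) =
      (C / C') * ((p - 1) / (p - α)) ^ ((p - 1) * l / p) * p ^ (-(l / p)) := by
    rw [hD, div_eq_mul_inv, show (p : ℝ)⁻¹ = p ^ (-1 : ℝ) by rw [Real.rpow_neg_one],
      Real.mul_rpow (by positivity) (by positivity),
      Real.mul_rpow (by positivity) (by positivity),
      Real.mul_rpow (by positivity) (by positivity),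
      ← Real.rpow_mul hC.le, ← Real.rpow_mul hC'.le,
      ← Real.rpow_mul (le_of_lt (div_pos hp1 hpα)), ← Real.rpow_mul hp0.le,
      show p / l * (l / p) = 1 by field_simp,
      show -(p / l) * (l / p) = -1 by field_simp,
      show (p - 1) * (l / p) = (p - 1) * l / p by ring,
      show (-1 : ℝ) * (l / p) = -(l / p) by ring,
      Real.rpow_one, Real.rpow_neg_one]
    ring
  -- value of BDK
  have hval : BDK p l (fun t => C * t ^ (α - 1)) (fun t => C' * t ^ (α - 1)) 0
      (Set.Ioc (0:ℝ) 1) =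
      ENNReal.ofReal (((p - l) / p) ^ ((p - l) / p) * (C / C') *
        ((p - 1) / (p - α)) ^ ((p - 1) * l / p) * p ^ (-(l / p))) := by
    rw [BDK, ← he, houter, ENNReal.ofReal_rpow_of_pos (by positivity), hfin,
      ← ENNReal.ofReal_mul (by positivity)]
    congr 1
    ring
  refine ⟨hval, ?_⟩
  rw [hval, ENNReal.ofReal_le_one,
    show ((p - l) / p) ^ ((p - l) / p) * (C / C') *
        ((p - 1) / (p - α)) ^ ((p - 1) * l / p) * p ^ (-(l / p)) =
      (C * ((p - l) / p) ^ ((p - l) / p) *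
        ((p - 1) / (p - α)) ^ ((p - 1) * l / p) * p ^ (-(l / p))) / C' by ring,
    div_le_one hC']
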